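/- Let E be a finite-dimensional real inner product space, D ⊆ E a linear subspace, W := ♭(D) ⊆ E*, γ : E* → E* the orthogonal projection onto W with respect to ⟪·,·⟫_*, Γ(q,p) := (q, γ(p)), and ω the canonical symplectic form on E × E*. For smooth f, g : E × W → ℝ define the Eden bracket {f,g}_E(m) := ω(X_{f∘Γ}(m), X_{g∘Γ}(m)) for m ∈ E × W, where X_F(x) is the unique element with ω(X_F(x),·) = DF(x). Then {·,·}_E is ℝ-bilinear, skew-symmetric ({g,f}_E = −{f,g}_E), and satisfies the Leibniz rule {f·f', g}_E = f·{f',g}_E + f'·{f,g}_E for all smooth f, f', g : E × W → ℝ; that is, {·,·}_E is an almost Poisson bracket. -/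

import Mathlib

open InnerProductSpace

/-- The canonical symplectic form on `E × E*`: `ω((v,α),(w,β)) = β(v) − α(w)`. -/
def canOmega (E : Type*) [NormedAddCommGroup E] [NormedSpace ℝ E] :
    (E × (E →L[ℝ] ℝ)) → (E × (E →L[ℝ] ℝ)) → ℝ :=
  fun x y => y.2 x.1 - x.2 y.1

/-- The inner product `⟪·,·⟫_*` induced on the dual `E*` by the musical isomorphism:
`⟪α,β⟫_* = ⟪♯α, ♯β⟫`. -/
noncomputable def dualInner {E : Type*} [NormedAddCommGroup E] [InnerProductSpace ℝ E]
    [FiniteDimensional ℝ E] (α β : E →L[ℝ] ℝ) : ℝ :=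
  inner ℝ ((InnerProductSpace.toDual ℝ E).symm α) ((InnerProductSpace.toDual ℝ E).symm β)

/-- The Eden bracket on `E × W`:
`{f,g}_E(m) := ω(X_{f∘Γ}(m), X_{g∘Γ}(m))`, with `Γ(q,p) = (q, γ(p))`. -/
noncomputable def edenBracket (E : Type*) [NormedAddCommGroup E] [InnerProductSpace ℝ E]
    [FiniteDimensional ℝ E] (W : Submodule ℝ (E →L[ℝ] ℝ))
    (γ : (E →L[ℝ] ℝ) → (E →L[ℝ] ℝ)) (hγW : ∀ α, γ α ∈ W)
    (XF : (E × (E →L[ℝ] ℝ) → ℝ) → E × (E →L[ℝ] ℝ) → E × (E →L[ℝ] ℝ))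
    (f g : E × ↥W → ℝ) (m : E × ↥W) : ℝ :=
  canOmega E
    (XF (fun x => f (x.1, ⟨γ x.2, hγW x.2⟩)) (m.1, ↑m.2))
    (XF (fun x => g (x.1, ⟨γ x.2, hγW x.2⟩)) (m.1, ↑m.2))

set_option maxHeartbeats 1000000 in
set_option synthInstance.maxHeartbeats 1000000 in
/-- The Eden bracket `{f,g}_E(m) := ω(X_{f∘Γ}(m), X_{g∘Γ}(m))` on `E × W` is
ℝ-bilinear, skew-symmetric and satisfies the Leibniz rule, i.e. it is an almost Poisson
bracket. -/
theorem eden_bracket_is_almost_poisson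
    (E : Type*) [NormedAddCommGroup E] [InnerProductSpace ℝ E] [FiniteDimensional ℝ E]
    (D : Submodule ℝ E)
    (W : Submodule ℝ (E →L[ℝ] ℝ))
    (hW : W = Submodule.map (InnerProductSpace.toDual ℝ E).toLinearEquiv.toLinearMap D)
    -- `γ` is the orthogonal projection of `E*` onto `W` w.r.t. the dual inner product:
    (γ : (E →L[ℝ] ℝ) → (E →L[ℝ] ℝ))
    (hγW : ∀ α, γ α ∈ W)
    (hγorth : ∀ α, ∀ w ∈ W, dualInner (α - γ α) w = 0)
    -- `X_F(x)` is the (unique) Hamiltonian vector of `F` at `x`: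
    (XF : (E × (E →L[ℝ] ℝ) → ℝ) → E × (E →L[ℝ] ℝ) → E × (E →L[ℝ] ℝ))
    (hXF : ∀ (F : E × (E →L[ℝ] ℝ) → ℝ) (x : E × (E →L[ℝ] ℝ)), DifferentiableAt ℝ F x →
      ∀ u, canOmega E (XF F x) u = fderiv ℝ F x u) :
    -- ℝ-bilinearity:
    (∀ (a b : ℝ) (f f' g : E × ↥W → ℝ),
      ContDiff ℝ (⊤ : ℕ∞) f → ContDiff ℝ (⊤ : ℕ∞) f' → ContDiff ℝ (⊤ : ℕ∞) g → ∀ m : E × ↥W,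
        edenBracket E W γ hγW XF (fun x => a * f x + b * f' x) g m =
          a * edenBracket E W γ hγW XF f g m + b * edenBracket E W γ hγW XF f' g m ∧
        edenBracket E W γ hγW XF g (fun x => a * f x + b * f' x) m =
          a * edenBracket E W γ hγW XF g f m + b * edenBracket E W γ hγW XF g f' m) ∧
    -- skew-symmetry:
    (∀ f g : E × ↥W → ℝ, ContDiff ℝ (⊤ : ℕ∞) f → ContDiff ℝ (⊤ : ℕ∞) g → ∀ m : E × ↥W,
      edenBracket E W γ hγW XF g f m = - edenBracket E W γ hγW XF f g m) ∧
    -- Leibniz rule: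
    (∀ f f' g : E × ↥W → ℝ,
      ContDiff ℝ (⊤ : ℕ∞) f → ContDiff ℝ (⊤ : ℕ∞) f' → ContDiff ℝ (⊤ : ℕ∞) g → ∀ m : E × ↥W,
        edenBracket E W γ hγW XF (fun x => f x * f' x) g m =
          f m * edenBracket E W γ hγW XF f' g m +
            f' m * edenBracket E W γ hγW XF f g m) := by
  classical
  set e := InnerProductSpace.toDual ℝ E with he
  -- membership characterization of W
  have hmem : ∀ α : E →L[ℝ] ℝ, α ∈ W ↔ e.symm α ∈ D := by
    intro α
    rw [hW]
    constructor
    · rintro ⟨d, hd, rfl⟩; simpa using hd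
    · intro h; exact ⟨e.symm α, h, by simp⟩
  -- γ equals the explicit orthogonal projection
  have hγ : ∀ α, γ α = e ((D.orthogonalProjectionOnto (e.symm α) : E)) := by
    intro α
    set p : E →L[ℝ] ℝ := e ((D.orthogonalProjectionOnto (e.symm α) : E)) with hp
    have hpW : p ∈ W := (hmem p).2 (by simp [hp])
    have hporth : ∀ w ∈ W, dualInner (α - p) w = 0 := by
      intro w hw
      have hw' : e.symm w ∈ D := (hmem w).1 hw
      have h1 : e.symm (α - p) = e.symm α - (D.orthogonalProjectionOnto (e.symm α) : E) := by
        simp [hp]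
      rw [dualInner, ← he, h1]
      exact Submodule.starProjection_inner_eq_zero (K := D) _ _ hw'
    have hdiffW : γ α - p ∈ W := W.sub_mem (hγW α) hpW
    have hz : dualInner (γ α - p) (γ α - p) = 0 := by
      have key : ∀ w, dualInner (γ α - p) w = dualInner (α - p) w - dualInner (α - γ α) w := by
        intro w
        simp only [dualInner, map_sub, inner_sub_left]
        ring
      rw [key, hporth _ hdiffW, hγorth α _ hdiffW]; ring
    have hz2 : e.symm (γ α - p) = 0 := by
      rw [dualInner, ← he] at hz
      exact inner_self_eq_zero.mp hz
    have : γ α - p = 0 := by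
      have := congrArg e hz2
      simpa using this
    have := sub_eq_zero.mp this
    exact this
  -- γ fixes W
  have hγfix : ∀ w : ↥W, γ (w : E →L[ℝ] ℝ) = (w : E →L[ℝ] ℝ) := by
    intro w
    have hwD : e.symm (w : E →L[ℝ] ℝ) ∈ D := (hmem _).1 w.2
    rw [hγ]
    have : D.orthogonalProjectionOnto (e.symm (w : E →L[ℝ] ℝ)) = ⟨e.symm w, hwD⟩ :=
      Submodule.orthogonalProjectionOnto_mem_subspace_eq_self (⟨e.symm w, hwD⟩ : D)
    rw [this]
    simp
  -- the projection as a linear map into W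
  have hγadd : ∀ α β, γ (α + β) = γ α + γ β := by
    intro α β; rw [hγ, hγ, hγ]; simp
  have hγsmul : ∀ (a : ℝ) α, γ (a • α) = a • γ α := by
    intro a α; rw [hγ, hγ]
    simp
  let Klin : (E →L[ℝ] ℝ) →ₗ[ℝ] ↥W :=
    { toFun := fun α => ⟨γ α, hγW α⟩
      map_add' := fun α β => Subtype.ext (hγadd α β)
      map_smul' := fun a α => Subtype.ext (hγsmul a α) }
  let Kcont : (E →L[ℝ] ℝ) →L[ℝ] ↥W := ⟨Klin, by
    have hγc : Continuous γ := by
      have : γ = fun α => e ((D.orthogonalProjectionOnto (e.symm α) : E)) := funext hγ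
      rw [this]
      exact e.continuous.comp (continuous_subtype_val.comp
        (D.orthogonalProjectionOnto.continuous.comp e.symm.continuous))
    exact hγc.subtype_mk hγW⟩
  have hK : ∀ α, Kcont α = (⟨γ α, hγW α⟩ : ↥W) := fun α => rfl
  -- differentiability of pullbacks
  have hdiffF : ∀ f : E × ↥W → ℝ, ContDiff ℝ (⊤ : ℕ∞) f →
      ∀ x, DifferentiableAt ℝ (fun x : E × (E →L[ℝ] ℝ) => f (x.1, ⟨γ x.2, hγW x.2⟩)) x := by
    intro f hf x
    have h1 : ContDiff ℝ (⊤ : ℕ∞) (fun x : E × (E →L[ℝ] ℝ) => f (x.1, Kcont x.2)) :=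
      hf.comp (contDiff_fst.prodMk (by fun_prop))
    have h2 : (fun x : E × (E →L[ℝ] ℝ) => f (x.1, ⟨γ x.2, hγW x.2⟩)) =
        fun x : E × (E →L[ℝ] ℝ) => f (x.1, Kcont x.2) := by
      funext x; rw [hK]
    rw [h2]
    exact (h1.differentiable (by simp)).differentiableAt
  -- the bracket as a derivative
  have hkey : ∀ (f g : E × ↥W → ℝ), ContDiff ℝ (⊤ : ℕ∞) f → ∀ m : E × ↥W,
      edenBracket E W γ hγW XF f g m =
        fderiv ℝ (fun x : E × (E →L[ℝ] ℝ) => f (x.1, ⟨γ x.2, hγW x.2⟩)) (m.1, ↑m.2)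
          (XF (fun x : E × (E →L[ℝ] ℝ) => g (x.1, ⟨γ x.2, hγW x.2⟩)) (m.1, ↑m.2)) := by
    intro f g hf m
    exact hXF _ _ (hdiffF f hf _) _
  -- skew-symmetry (unconditional)
  have hskew : ∀ f g : E × ↥W → ℝ, ∀ m : E × ↥W,
      edenBracket E W γ hγW XF g f m = - edenBracket E W γ hγW XF f g m := by
    intro f g m
    simp only [edenBracket, canOmega]
    ring
  refine ⟨?_, fun f g _ _ m => hskew f g m, ?_⟩
  · -- bilinearity
    intro a b f f' g hf hf' hg m
    have hF := hdiffF f hf (m.1, ↑m.2)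
    have hF' := hdiffF f' hf' (m.1, ↑m.2)
    have hlin : edenBracket E W γ hγW XF (fun x => a * f x + b * f' x) g m =
        a * edenBracket E W γ hγW XF f g m + b * edenBracket E W γ hγW XF f' g m := by
      rw [hkey _ g ((contDiff_const.mul hf).add (contDiff_const.mul hf')) m,
        hkey f g hf m, hkey f' g hf' m]
      have heq : (fun x : E × (E →L[ℝ] ℝ) =>
          (fun y => a * f y + b * f' y) (x.1, ⟨γ x.2, hγW x.2⟩)) =
          fun x : E × (E →L[ℝ] ℝ) => a * f (x.1, ⟨γ x.2, hγW x.2⟩) +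
            b * f' (x.1, ⟨γ x.2, hγW x.2⟩) := rfl
      rw [heq, fderiv_fun_add (hF.const_mul a) (hF'.const_mul b),
        fderiv_const_mul hF a, fderiv_const_mul hF' b]
      simp
    refine ⟨hlin, ?_⟩
    rw [hskew (fun x => a * f x + b * f' x) g m, hlin, hskew f g m, hskew f' g m]
    ring
  · -- Leibniz
    intro f f' g hf hf' hg m
    have hF := hdiffF f hf (m.1, ↑m.2)
    have hF' := hdiffF f' hf' (m.1, ↑m.2)
    rw [hkey _ g (hf.mul hf') m, hkey f g hf m, hkey f' g hf' m]
    have heq : (fun x : E × (E →L[ℝ] ℝ) => (fun y => f y * f' y) (x.1, ⟨γ x.2, hγW x.2⟩)) =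
        fun x : E × (E →L[ℝ] ℝ) =>
          f (x.1, ⟨γ x.2, hγW x.2⟩) * f' (x.1, ⟨γ x.2, hγW x.2⟩) := rfl
    rw [heq, fderiv_fun_mul hF hF']
    have hfix : (⟨γ (↑m.2), hγW (↑m.2)⟩ : ↥W) = m.2 := Subtype.ext (hγfix m.2)
    simp [hfix]
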